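/- All eigenvalues of the 4×4 matrix J(E₂) have negative real parts if and only if R_{0w̄} > 1 and R_{0w|w̄} < 1. -/

import Mathlib

open Polynomial

lemma det_four' (M : Matrix (Fin 4) (Fin 4) ℂ) : M.det =
    M 0 0 * (M 1 1 * (M 2 2 * M 3 3 - M 2 3 * M 3 2) - M 1 2 * (M 2 1 * M 3 3 - M 2 3 * M 3 1)
      + M 1 3 * (M 2 1 * M 3 2 - M 2 2 * M 3 1))
  - M 0 1 * (M 1 0 * (M 2 2 * M 3 3 - M 2 3 * M 3 2) - M 1 2 * (M 2 0 * M 3 3 - M 2 3 * M 3 0)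
      + M 1 3 * (M 2 0 * M 3 2 - M 2 2 * M 3 0))
  + M 0 2 * (M 1 0 * (M 2 1 * M 3 3 - M 2 3 * M 3 1) - M 1 1 * (M 2 0 * M 3 3 - M 2 3 * M 3 0)
      + M 1 3 * (M 2 0 * M 3 1 - M 2 1 * M 3 0))
  - M 0 3 * (M 1 0 * (M 2 1 * M 3 2 - M 2 2 * M 3 1) - M 1 1 * (M 2 0 * M 3 2 - M 2 2 * M 3 0)
      + M 1 2 * (M 2 0 * M 3 1 - M 2 1 * M 3 0)) := by
  simp [Matrix.det_succ_row_zero, Fin.sum_univ_succ, Fin.succAbove, Matrix.submatrix,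
    show (Fin.succ 2 : Fin 4) = 3 from rfl, show ((2:Fin 3).castSucc : Fin 4) = 2 from rfl,
    show ((1: Fin 4) < Fin.succ 2) = True from by decide]
  ring

lemma evalCharpoly' (M : Matrix (Fin 4) (Fin 4) ℂ) (z : ℂ) :
    M.charpoly.eval z = (Matrix.of fun i j => z * (if i = j then 1 else 0) - M i j).det := by
  rw [Matrix.charpoly, ← Polynomial.coe_evalRingHom, RingHom.map_det]
  congr 1
  ext i j
  by_cases h : i = j <;> simp [Matrix.charmatrix_apply, Matrix.diagonal, h]

set_option maxHeartbeats 1000000 in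
lemma evalCharpolyMap (a b c d e f g h i j k l m n o p : ℝ) (z : ℂ) :
    ((!![a,b,c,d; e,f,g,h; i,j,k,l; m,n,o,p]).map Complex.ofReal).charpoly.eval z =
    (z - (a:ℂ)) * ((z - (f:ℂ)) * ((z - (k:ℂ)) * (z - (p:ℂ)) - (-(l:ℂ)) * (-(o:ℂ))) - (-(g:ℂ)) * ((-(j:ℂ)) * (z - (p:ℂ)) - (-(l:ℂ)) * (-(n:ℂ))) + (-(h:ℂ)) * ((-(j:ℂ)) * (-(o:ℂ)) - (z - (k:ℂ)) * (-(n:ℂ))))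
    - (-(b:ℂ)) * ((-(e:ℂ)) * ((z - (k:ℂ)) * (z - (p:ℂ)) - (-(l:ℂ)) * (-(o:ℂ))) - (-(g:ℂ)) * ((-(i:ℂ)) * (z - (p:ℂ)) - (-(l:ℂ)) * (-(m:ℂ))) + (-(h:ℂ)) * ((-(i:ℂ)) * (-(o:ℂ)) - (z - (k:ℂ)) * (-(m:ℂ))))
    + (-(c:ℂ)) * ((-(e:ℂ)) * ((-(j:ℂ)) * (z - (p:ℂ)) - (-(l:ℂ)) * (-(n:ℂ))) - (z - (f:ℂ)) * ((-(i:ℂ)) * (z - (p:ℂ)) - (-(l:ℂ)) * (-(m:ℂ))) + (-(h:ℂ)) * ((-(i:ℂ)) * (-(n:ℂ)) - (-(j:ℂ)) * (-(m:ℂ))))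
    - (-(d:ℂ)) * ((-(e:ℂ)) * ((-(j:ℂ)) * (-(o:ℂ)) - (z - (k:ℂ)) * (-(n:ℂ))) - (z - (f:ℂ)) * ((-(i:ℂ)) * (-(o:ℂ)) - (z - (k:ℂ)) * (-(m:ℂ))) + (-(g:ℂ)) * ((-(i:ℂ)) * (-(n:ℂ)) - (-(j:ℂ)) * (-(m:ℂ)))) := by
  rw [evalCharpoly', det_four']
  norm_num [Matrix.map_apply, Matrix.cons_val_two, Matrix.cons_val_three, Matrix.vecHead, Matrix.vecTail, show ((0:Fin 4) = 1) = False from by decide, show ((0:Fin 4) = 2) = False from by decide, show ((0:Fin 4) = 3) = False from by decide, show ((1:Fin 4) = 0) = False from by decide, show ((1:Fin 4) = 2) = False from by decide, show ((1:Fin 4) = 3) = False from by decide, show ((2:Fin 4) = 0) = False from by decide, show ((2:Fin 4) = 1) = False from by decide, show ((2:Fin 4) = 3) = False from by decide, show ((3:Fin 4) = 0) = False from by decide, show ((3:Fin 4) = 1) = False from by decide, show ((3:Fin 4) = 2) = False from by decide]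

set_option maxHeartbeats 2000000 in
lemma keyFactor (μa ψ μwb μw φwb φw ρ2 R0wb R0wwb : ℝ)
    (hμa : 0 < μa) (hψ : 0 < ψ) (hμwb : 0 < μwb) (hμw : 0 < μw)
    (hφwb : 0 < φwb) (hρ1 : ρ2 < 1)
    (hR0wb : R0wb = φwb * ψ / (2 * μwb * (μa + ψ)))
    (hR0wwb : R0wwb = φw * μwb * (1 - ρ2) / (φwb * μw))
    (z : ℂ) :
    ((!![-(μa + ψ) * R0wb, (μa + ψ) * (1 - R0wb), φwb / R0wb,
                  (ρ2 * φw - φwb) / R0wb;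
                 0, -(μa + ψ), 0, φw * (1 - ρ2) / R0wb;
                 ψ / 2, 0, -μwb, 0;
                 0, ψ / 2, 0, -μw] : Matrix (Fin 4) (Fin 4) ℝ).map Complex.ofReal).charpoly.eval z =
      (z ^ 2 + (((μa + ψ) * R0wb + μwb : ℝ) : ℂ) * z +
          (((μa + ψ) * μwb * (R0wb - 1) : ℝ) : ℂ)) *
        (z ^ 2 + ((μa + ψ + μw : ℝ) : ℂ) * z +
          (((μa + ψ) * μw * (1 - R0wwb) : ℝ) : ℂ)) := by
  have hR0pos : 0 < R0wb := by rw [hR0wb]; positivity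
  have h1r : (φwb / R0wb) * ψ = 2 * μwb * (μa + ψ) := by
    rw [hR0wb]; field_simp
  have h2r : (φw * (1 - ρ2) / R0wb) * ψ = 2 * (μa + ψ) * μw * R0wwb := by
    rw [hR0wb, hR0wwb]; field_simp
  have h1 := congrArg (Complex.ofReal) h1r
  have h2 := congrArg (Complex.ofReal) h2r
  push_cast at h1 h2
  rw [evalCharpolyMap]
  push_cast
  linear_combination
    (-((z + ((μa:ℂ) + ψ)) * (z + (μw:ℂ)) - ((φw:ℂ) * (1 - (ρ2:ℂ)) / (R0wb:ℂ)) * (ψ:ℂ) / 2) / 2) * h1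
    + (-(z ^ 2 + (((μa:ℂ) + ψ) * (R0wb:ℂ) + (μwb:ℂ)) * z
        + ((μa:ℂ) + ψ) * (μwb:ℂ) * ((R0wb:ℂ) - 1)) / 2) * h2

lemma quad_aux' (c d : ℝ) (hc : 0 < c) :
    (∀ z : ℂ, z ^ 2 + (c : ℂ) * z + (d : ℂ) = 0 → z.re < 0) ↔ 0 < d := by
  constructor
  · intro h
    by_contra hd
    push_neg at hd
    set s := Real.sqrt (c ^ 2 - 4 * d) with hs
    have hs2 : s ^ 2 = c ^ 2 - 4 * d := Real.sq_sqrt (by nlinarith)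
    set x := (s - c) / 2 with hx
    have hcs : c ≤ s := by
      have h1 : Real.sqrt (c ^ 2) ≤ s := Real.sqrt_le_sqrt (by linarith)
      rwa [Real.sqrt_sq hc.le] at h1
    have hx0 : 0 ≤ x := by rw [hx]; linarith
    have h0 : x ^ 2 + c * x + d = 0 := by rw [hx]; nlinarith [hs2]
    have root : (x : ℂ) ^ 2 + (c : ℂ) * (x : ℂ) + (d : ℂ) = 0 := by
      have := congrArg (Complex.ofReal) h0
      push_cast at this
      exact this
    have := h x root
    simp at this
    linarith
  · intro hd z hz
    by_contra hre
    push_neg at hre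
    have hr := congrArg Complex.re hz
    have hi := congrArg Complex.im hz
    simp [pow_two, Complex.mul_re, Complex.mul_im, Complex.add_re, Complex.add_im] at hr hi
    have h2 : (2 * z.re + c) * (z.im * z.im) = 0 := by linear_combination z.im * hi
    have h3 : z.im * z.im = 0 := by
      rcases mul_eq_zero.mp h2 with h | h
      · linarith
      · exact h
    have him : z.im = 0 := by nlinarith [h3]
    nlinarith [hr, him, hre, hd, hc]

/-- All eigenvalues of `J(E₂)` have negative real parts iff `R_{0w̄} > 1` and
`R_{0w|w̄} < 1`. Eigenvalues are the complex roots of the characteristic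
polynomial. -/
theorem stmt_6 (μa ψ μwb μw φwb φw ρ2 : ℝ)
    (hμa : 0 < μa) (hψ : 0 < ψ) (hμwb : 0 < μwb) (hμw : 0 < μw)
    (hφwb : 0 < φwb) (hφw : 0 < φw) (hρ2 : ρ2 ∈ Set.Ico (0:ℝ) 1)
    (R0wb R0wwb : ℝ)
    (hR0wb : R0wb = φwb * ψ / (2 * μwb * (μa + ψ)))
    (hR0wwb : R0wwb = φw * μwb * (1 - ρ2) / (φwb * μw))
    (J : Matrix (Fin 4) (Fin 4) ℝ)
    (hJ : J = !![-(μa + ψ) * R0wb, (μa + ψ) * (1 - R0wb), φwb / R0wb,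
                  (ρ2 * φw - φwb) / R0wb;
                 0, -(μa + ψ), 0, φw * (1 - ρ2) / R0wb;
                 ψ / 2, 0, -μwb, 0;
                 0, ψ / 2, 0, -μw]) :
    (∀ z : ℂ, (J.map (Complex.ofReal)).charpoly.eval z = 0 → z.re < 0) ↔
      (1 < R0wb ∧ R0wwb < 1) := by
  obtain ⟨hρ0, hρ1⟩ := hρ2
  have hR0pos : 0 < R0wb := by rw [hR0wb]; positivity
  have key : ∀ z : ℂ, (J.map (Complex.ofReal)).charpoly.eval z =
      (z ^ 2 + (((μa + ψ) * R0wb + μwb : ℝ) : ℂ) * z +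
          (((μa + ψ) * μwb * (R0wb - 1) : ℝ) : ℂ)) *
        (z ^ 2 + ((μa + ψ + μw : ℝ) : ℂ) * z +
          (((μa + ψ) * μw * (1 - R0wwb) : ℝ) : ℂ)) := by
    intro z
    rw [hJ]
    exact keyFactor μa ψ μwb μw φwb φw ρ2 R0wb R0wwb hμa hψ hμwb hμw hφwb hρ1 hR0wb hR0wwb z
  have hc1 : 0 < (μa + ψ) * R0wb + μwb := by positivity
  have hc2 : 0 < μa + ψ + μw := by positivity
  have hsplit : (∀ z : ℂ, (J.map (Complex.ofReal)).charpoly.eval z = 0 → z.re < 0) ↔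
      ((∀ z : ℂ, z ^ 2 + (((μa + ψ) * R0wb + μwb : ℝ) : ℂ) * z +
          (((μa + ψ) * μwb * (R0wb - 1) : ℝ) : ℂ) = 0 → z.re < 0) ∧
       (∀ z : ℂ, z ^ 2 + ((μa + ψ + μw : ℝ) : ℂ) * z +
          (((μa + ψ) * μw * (1 - R0wwb) : ℝ) : ℂ) = 0 → z.re < 0)) := by
    simp only [key]
    constructor
    · intro H
      exact ⟨fun z h => H z (by rw [h, zero_mul]), fun z h => H z (by rw [h, mul_zero])⟩
    · rintro ⟨H1, H2⟩ z h
      rcases mul_eq_zero.mp h with h | h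
      · exact H1 z h
      · exact H2 z h
  rw [hsplit, quad_aux' _ _ hc1, quad_aux' _ _ hc2]
  have hk1 : 0 < (μa + ψ) * μwb := by positivity
  have hk2 : 0 < (μa + ψ) * μw := by positivity
  constructor
  · rintro ⟨h1, h2⟩
    exact ⟨by nlinarith [h1, hk1], by nlinarith [h2, hk2]⟩
  · rintro ⟨h1, h2⟩
    exact ⟨by nlinarith [hk1, h1], by nlinarith [hk2, h2]⟩
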